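/- Assume: (1) M ≤ P implies M ∈ K, P ∈ K and M ⊆ P, and ≤ is coherent (M₀ ⊆ M₁, M₀ ≤ P and M₁ ≤ P imply M₀ ≤ M₁); (2) nf has right monotonicity; (3) λ is an infinite cardinal and (closure) for every P ∈ K and every B ⊆ P there exists M with B ⊆ M ≤ P and |M| ≤ |B| + λ; (4) (λ-model-witness property) for all M₀, M' ∈ K with M₀ ≤ M' and every A ⊆ U, if nf(M₀, A, B₀) holds for every B₀ ⊆ M' with |B₀| ≤ λ, then nf(M₀, A, M'). Let μ be a regular cardinal with μ > λ, let M ∈ K and A ⊆ U, and suppose that for every M₀ ≤ M with |M₀| < μ we have ¬nf(M₀, A, M). Then there exists a ≤-increasing chain ⟨M_i : i < μ⟩ with M_i ≤ M and |M_i| < μ for every i < μ, such that for every i < μ one has ¬nf(M_i, A, M_{i+1}), and consequently ¬nf(M_i, A, ⋃_{j<μ} M_j). -/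

import Mathlib

universe u

noncomputable def chainAux {U : Type u} (Clo Bad : Set U → Set U) : Ordinal.{u} → Set U :=
  Ordinal.lt_wf.fix fun i rec =>
    Clo (⋃ j : Set.Iio i, (rec j j.2 ∪ Bad (rec j j.2)))

theorem chainAux_eq {U : Type u} (Clo Bad : Set U → Set U) (i : Ordinal.{u}) :
    chainAux Clo Bad i =
      Clo (⋃ j : Set.Iio i, (chainAux Clo Bad j ∪ Bad (chainAux Clo Bad j))) :=
  Ordinal.lt_wf.fix_eq _ i

/-- Core of Proposition `barleq-prop`(2): from failure of set local character below
a regular `μ > λ` one builds a `≤`-increasing chain of length `μ` of small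
submodels of `M` witnessing the failure of chain local character. -/
theorem stmt_7 {U : Type u} (K : Set (Set U)) (nf : Set U → Set U → Set U → Prop)
    (le : Set U → Set U → Prop)
    (hle : ∀ M P : Set U, le M P → M ∈ K ∧ P ∈ K ∧ M ⊆ P)
    (hcoh : ∀ M₀ M₁ P : Set U, M₀ ⊆ M₁ → le M₀ P → le M₁ P → le M₀ M₁)
    (hrmono : ∀ M ∈ K, ∀ A B B₀ : Set U, nf M A B → B₀ ⊆ B → nf M A B₀)
    (lam : Cardinal.{u}) (hlam : Cardinal.aleph0 ≤ lam)
    (hclosure : ∀ P ∈ K, ∀ B : Set U, B ⊆ P →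
      ∃ M : Set U, B ⊆ M ∧ le M P ∧ Cardinal.mk ↥M ≤ Cardinal.mk ↥B + lam)
    (hwitness : ∀ M₀ M' : Set U, le M₀ M' → ∀ A : Set U,
      (∀ B₀ : Set U, B₀ ⊆ M' → Cardinal.mk ↥B₀ ≤ lam → nf M₀ A B₀) → nf M₀ A M')
    (μ : Cardinal.{u}) (hμ : μ.IsRegular) (hmu_lam : lam < μ)
    (M : Set U) (hM : M ∈ K) (A : Set U)
    (hfork : ∀ M₀ : Set U, le M₀ M → Cardinal.mk ↥M₀ < μ → ¬ nf M₀ A M) :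
    ∃ Mc : Ordinal.{u} → Set U,
      (∀ i j : Ordinal.{u}, i < j → j < μ.ord → le (Mc i) (Mc j)) ∧
      (∀ i < μ.ord, le (Mc i) M ∧ Cardinal.mk ↥(Mc i) < μ) ∧
      (∀ i < μ.ord, ¬ nf (Mc i) A (Mc (i + 1))) ∧
      (∀ i < μ.ord, ¬ nf (Mc i) A (⋃ j < μ.ord, Mc j)) := by
  classical
  -- a "bad" small subset of M over which A forks, when it exists
  set Bad : Set U → Set U := fun N =>
    if h : ∃ B₀ : Set U, B₀ ⊆ M ∧ Cardinal.mk ↥B₀ ≤ lam ∧ ¬ nf N A B₀ then h.choose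
    else ∅ with hBad
  have bad_sub : ∀ N, Bad N ⊆ M := by
    intro N
    rw [hBad]; dsimp only
    split
    next h => exact h.choose_spec.1
    next => exact Set.empty_subset _
  have bad_card : ∀ N, Cardinal.mk ↥(Bad N) ≤ lam := by
    intro N
    rw [hBad]; dsimp only
    split
    next h => exact h.choose_spec.2.1
    next => simp [Cardinal.mk_emptyCollection]
  have bad_nf : ∀ N, le N M → Cardinal.mk ↥N < μ → ¬ nf N A (Bad N) := by
    intro N hN hNc
    have hex : ∃ B₀ : Set U, B₀ ⊆ M ∧ Cardinal.mk ↥B₀ ≤ lam ∧ ¬ nf N A B₀ := by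
      by_contra hc
      push_neg at hc
      exact hfork N hN hNc (hwitness N M hN A fun B₀ h1 h2 => hc B₀ h1 h2)
    rw [hBad]; dsimp only
    rw [dif_pos hex]
    exact hex.choose_spec.2.2
  -- closure operator inside M
  set Clo : Set U → Set U := fun B =>
    (hclosure M hM (B ∩ M) Set.inter_subset_right).choose with hClo
  have clo_sub : ∀ B, B ∩ M ⊆ Clo B := fun B =>
    (hclosure M hM (B ∩ M) Set.inter_subset_right).choose_spec.1
  have clo_le : ∀ B, le (Clo B) M := fun B =>
    (hclosure M hM (B ∩ M) Set.inter_subset_right).choose_spec.2.1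
  have clo_card : ∀ B, Cardinal.mk ↥(Clo B) ≤ Cardinal.mk ↥(B ∩ M) + lam := fun B =>
    (hclosure M hM (B ∩ M) Set.inter_subset_right).choose_spec.2.2
  set Mc : Ordinal.{u} → Set U := chainAux Clo Bad with hMc
  have mc_le : ∀ i, le (Mc i) M := by
    intro i
    rw [hMc, chainAux_eq]
    exact clo_le _
  have mc_subM : ∀ i, Mc i ⊆ M := fun i => (hle _ _ (mc_le i)).2.2
  have mc_mono : ∀ i j : Ordinal.{u}, i < j → Mc i ⊆ Mc j := by
    intro i j hij
    conv_rhs => rw [hMc, chainAux_eq]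
    refine Set.Subset.trans ?_ (clo_sub _)
    refine Set.subset_inter ?_ (mc_subM i)
    exact Set.subset_iUnion_of_subset ⟨i, hij⟩ Set.subset_union_left
  have bad_in : ∀ i j : Ordinal.{u}, i < j → Bad (Mc i) ⊆ Mc j := by
    intro i j hij
    conv_rhs => rw [hMc, chainAux_eq]
    refine Set.Subset.trans ?_ (clo_sub _)
    refine Set.subset_inter ?_ (bad_sub _)
    exact Set.subset_iUnion_of_subset ⟨i, hij⟩ Set.subset_union_right
  -- cardinality bound by induction
  have mc_card : ∀ i, i < μ.ord → Cardinal.mk ↥(Mc i) < μ := by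
    intro i
    induction i using Ordinal.induction with
    | h i IH =>
      intro hi
      have hUnion :
          Cardinal.mk ↥(⋃ j : Set.Iio i, (Mc j ∪ Bad (Mc j))) < μ := by
        -- reindex via toType
        let e := (Ordinal.ToType.mk (o := i)).symm
        have heq : (⋃ j : Set.Iio i, (Mc j ∪ Bad (Mc j))) =
            ⋃ k : i.ToType, (Mc (e k) ∪ Bad (Mc (e k))) := by
          apply Set.Subset.antisymm
          · refine Set.iUnion_subset fun j => ?_
            refine Set.subset_iUnion_of_subset ((Ordinal.ToType.mk (o := i)) j) ?_
            have : e ((Ordinal.ToType.mk (o := i)) j) = j := (Ordinal.ToType.mk (o := i)).symm_apply_apply j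
            rw [this]
          · refine Set.iUnion_subset fun k => ?_
            exact Set.subset_iUnion (fun j : Set.Iio i => (Mc j ∪ Bad (Mc j))) (e k)
        rw [heq]
        refine lt_of_le_of_lt (Cardinal.mk_iUnion_le _) ?_
        have hidx : Cardinal.mk i.ToType < μ := by
          rw [Cardinal.mk_toType]
          exact Cardinal.lt_ord.1 hi
        refine Cardinal.mul_lt_of_lt hμ.aleph0_le hidx ?_
        refine Cardinal.iSup_lt_of_isRegular hμ hidx fun k => ?_
        have h1 : Cardinal.mk ↥(Mc (e k)) < μ := IH (e k) (e k).2 ((e k).2.trans hi)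
        have h2 : Cardinal.mk ↥(Bad (Mc (e k))) < μ := lt_of_le_of_lt (bad_card _) hmu_lam
        calc Cardinal.mk ↥(Mc (e k) ∪ Bad (Mc (e k)))
            ≤ Cardinal.mk ↥(Mc (e k)) + Cardinal.mk ↥(Bad (Mc (e k))) := Cardinal.mk_union_le _ _
          _ < μ := Cardinal.add_lt_of_lt hμ.aleph0_le h1 h2
      rw [hMc, chainAux_eq]
      refine lt_of_le_of_lt (clo_card _) ?_
      refine Cardinal.add_lt_of_lt hμ.aleph0_le ?_ (hmu_lam.trans_le le_rfl)
      refine lt_of_le_of_lt (Cardinal.mk_le_mk_of_subset Set.inter_subset_left) hUnion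
  have hordlim : Order.IsSuccLimit μ.ord := Cardinal.isSuccLimit_ord hμ.aleph0_le
  refine ⟨Mc, ?_, ?_, ?_, ?_⟩
  · intro i j hij _
    exact hcoh _ _ _ (mc_mono i j hij) (mc_le i) (mc_le j)
  · exact fun i hi => ⟨mc_le i, mc_card i hi⟩
  · intro i hi hnf
    have hK : Mc i ∈ K := (hle _ _ (mc_le i)).1
    exact bad_nf (Mc i) (mc_le i) (mc_card i hi)
      (hrmono _ hK A _ _ hnf (bad_in i (i + 1) (lt_add_one i)))
  · intro i hi hnf
    have hK : Mc i ∈ K := (hle _ _ (mc_le i)).1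
    have hsub : Bad (Mc i) ⊆ ⋃ j < μ.ord, Mc j := by
      have h1 : i + 1 < μ.ord := (Ordinal.add_one_eq_succ i) ▸ hordlim.succ_lt hi
      refine (bad_in i (i + 1) (lt_add_one i)).trans fun x hx => ?_
      exact Set.mem_biUnion h1 hx
    exact bad_nf (Mc i) (mc_le i) (mc_card i hi) (hrmono _ hK A _ _ hnf hsub)
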